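/- Priority Steiner Tree and Monotonic k-TSN are equivalent under strict approximation-preserving reductions: given a Priority Steiner Tree instance (without multiedges), letting each edge e of priority p(e) exist at all times t ≥ p(e) and converting each demand (a_i, b_i) of priority p(a_i,b_i) to the temporal demand (a_i, b_i, p(a_i,b_i)) yields a Monotonic k-TSN instance whose feasible solutions of cost C correspond exactly to Priority Steiner Tree solutions of cost C, and vice versa. -/

import Mathlib

/-- Priority Steiner Tree feasibility: each demand `(a_i, b_i)` with priority `p_i`
is routed by a path of edges of priority at most `p_i`. -/
def pstFeasible {V : Type*} {k : ℕ} (E0 : Finset (V × V)) (p : V × V → ℕ)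
    (D : Fin k → (V × V) × ℕ) (F : Finset (V × V)) : Prop :=
  F ⊆ E0 ∧ ∀ i, Relation.ReflTransGen
    (fun u v => ((u, v) ∈ F ∧ p (u, v) ≤ (D i).2) ∨ ((v, u) ∈ F ∧ p (v, u) ≤ (D i).2))
    (D i).1.1 (D i).1.2

/-- The frame at time `t` of the constructed temporal instance: edge `e` of priority
`p e` exists at all times `t ≥ p e`. -/
def pstFrame {V : Type*} (E0 : Finset (V × V)) (p : V × V → ℕ) (t : ℕ) : Set (V × V) :=
  {e | e ∈ E0 ∧ p e ≤ t}

/-- Temporal feasibility for the constructed (monotonic) k-TSN instance, with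
demand `(a_i, b_i)` of priority `p_i` converted to the temporal demand
`(a_i, b_i, p_i)`. -/
def tsnFeasible {V : Type*} {k : ℕ} (E0 : Finset (V × V)) (p : V × V → ℕ)
    (D : Fin k → (V × V) × ℕ) (H : Finset (V × V)) : Prop :=
  H ⊆ E0 ∧ ∀ i, Relation.ReflTransGen
    (fun u v => ((u, v) ∈ H ∧ (u, v) ∈ pstFrame E0 p ((D i).2)) ∨
                ((v, u) ∈ H ∧ (v, u) ∈ pstFrame E0 p ((D i).2)))
    (D i).1.1 (D i).1.2

/-- the construction turns a Priority Steiner Tree instance (without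
multiedges) into a *monotonic* k-TSN instance whose feasible solutions of cost `C`
correspond exactly (here: are identical, with identical cost) to the Priority
Steiner Tree solutions of cost `C`, and vice versa. -/
theorem stmt3 {V : Type*} [DecidableEq V] {k : ℕ}
    (E0 : Finset (V × V)) (w : V × V → ℝ) (hw : ∀ e, 0 ≤ w e)
    (p : V × V → ℕ) (D : Fin k → (V × V) × ℕ) :
    (∀ t t' : ℕ, t ≤ t' → pstFrame E0 p t ⊆ pstFrame E0 p t') ∧
    (∀ (H : Finset (V × V)) (C : ℝ),
      (pstFeasible E0 p D H ∧ ∑ e ∈ H, w e = C) ↔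
      (tsnFeasible E0 p D H ∧ ∑ e ∈ H, w e = C)) := by
  constructor
  · intro t t' htt e he
    exact ⟨he.1, he.2.trans htt⟩
  · intro H C
    have key : pstFeasible E0 p D H ↔ tsnFeasible E0 p D H := by
      constructor
      · rintro ⟨hs, hr⟩
        refine ⟨hs, fun i => Relation.ReflTransGen.mono ?_ _ _ (hr i)⟩
        rintro u v (⟨h1, h2⟩ | ⟨h1, h2⟩)
        · exact Or.inl ⟨h1, hs h1, h2⟩
        · exact Or.inr ⟨h1, hs h1, h2⟩
      · rintro ⟨hs, hr⟩
        refine ⟨hs, fun i => Relation.ReflTransGen.mono ?_ _ _ (hr i)⟩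
        rintro u v (⟨h1, h2⟩ | ⟨h1, h2⟩)
        · exact Or.inl ⟨h1, h2.2⟩
        · exact Or.inr ⟨h1, h2.2⟩
    rw [key]
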